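/- Let d, k be positive integers, σ ∈ (0, 2k), Γ ≥ 1, C₁ > 0, M ≥ 0, and let ρ : ℝ^d → ℝ be a positive function. Let D be a set of indices ν, each assigned a gender e(ν) ∈ {1, …, 2^d − 1}, a scale ℓ(ν) = 2^{j(ν)} with j(ν) ∈ ℤ, and a corner c(ν) = 2^{j(ν)}·m(ν) with m(ν) ∈ ℤ^d, such that distinct indices have distinct triples (gender, scale, corner). For each ν ∈ D let ψ_ν : ℝ^d → ℝ be a C^{2k} function supported in the closed ball B(c(ν), Γ·ℓ(ν)) with |Δ^k ψ_ν(x)| ≤ C₁·ℓ(ν)^{-2k} for all x, and let f_ν ∈ ℝ satisfy |f_ν| ≤ M·ℓ(ν)^σ. Let D_g = { ν ∈ D : ρ(y) ≤ ℓ(ν) for every y ∈ B(c(ν), Γ·ℓ(ν)) }. Then there exists a constant C > 0, depending only on d, k, σ, Γ and C₁, such that for every x ∈ ℝ^d, ∑_{ν ∈ D_g} |f_ν| · |Δ^k ψ_ν(x)| ≤ C · M · ρ(x)^{σ - 2k}. -/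

import Mathlib

open Real

/-- The Laplacian of a function on `ℝ^d`: the sum of its pure second partial
derivatives, `Δ f(x) = ∑ i, ∂²f/∂xᵢ²(x)`. -/
noncomputable def Lap (d : ℕ) (f : EuclideanSpace ℝ (Fin d) → ℝ) :
    EuclideanSpace ℝ (Fin d) → ℝ :=
  fun x => ∑ i : Fin d,
    iteratedFDeriv ℝ 2 f x ![EuclideanSpace.single i 1, EuclideanSpace.single i 1]

lemma lap_support (d : ℕ) (f : EuclideanSpace ℝ (Fin d) → ℝ) :
    Function.support (Lap d f) ⊆ tsupport f := by
  intro x hx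
  by_contra h
  apply hx
  have h2 : iteratedFDeriv ℝ 2 f x = 0 := by
    by_contra h2
    exact h (support_iteratedFDeriv_subset 2 h2)
  simp [Lap, h2]

lemma iter_lap_support (d k : ℕ) (f : EuclideanSpace ℝ (Fin d) → ℝ) :
    Function.support ((Lap d)^[k] f) ⊆ tsupport f := by
  induction k generalizing f with
  | zero => exact subset_tsupport f
  | succ n ih =>
    rw [Function.iterate_succ_apply]
    exact (ih (Lap d f)).trans
      (closure_minimal (lap_support d f) (isClosed_tsupport f))

lemma coord_le_dist {d : ℕ} (x y : EuclideanSpace ℝ (Fin d)) (i : Fin d) :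
    |x i - y i| ≤ dist x y := by
  rw [EuclideanSpace.dist_eq, ← Real.sqrt_sq_eq_abs]
  apply Real.sqrt_le_sqrt
  have h : (x i - y i) ^ 2 = dist (x i) (y i) ^ 2 := by
    rw [Real.dist_eq, sq_abs]
  rw [h]
  exact Finset.single_le_sum (f := fun i => dist (x i) (y i) ^ 2)
    (fun _ _ => sq_nonneg _) (Finset.mem_univ i)


/-- Wavelet indices `ν ∈ D` carry a gender `e(ν) ∈ {1,…,2^d−1}`, a
scale `ℓ(ν) = 2^(j(ν))` and a corner `c(ν) = 2^(j(ν)) m(ν)`, distinct indices having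
distinct triples.  Each `ψ_ν` is `C^(2k)`, supported in `B(c(ν), Γ ℓ(ν))`, with
`|Δᵏψ_ν| ≤ C₁ ℓ(ν)^(-2k)`, and `|f_ν| ≤ M ℓ(ν)^σ`.  Over the "good" cubes
`D_g = {ν : ρ(y) ≤ ℓ(ν) for all y ∈ B(c(ν), Γ ℓ(ν))}` one has
`∑_{ν ∈ D_g} |f_ν| |Δᵏψ_ν(x)| ≤ C M ρ(x)^(σ-2k)` for a constant `C` depending only on
`d, k, σ, Γ, C₁` (the sum interpreted as a `tsum` in `ℝ≥0∞`). -/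
theorem good_cubes_laplacian_sum_bound
    (d k : ℕ) (hd : 0 < d) (hk : 0 < k) (σ : ℝ) (hσ0 : 0 < σ) (hσ : σ < 2 * (k : ℝ))
    (Γ : ℝ) (hΓ : 1 ≤ Γ) (C₁ : ℝ) (hC₁ : 0 < C₁) :
    ∃ C > 0, ∀ M : ℝ, 0 ≤ M →
      ∀ ρ : EuclideanSpace ℝ (Fin d) → ℝ, (∀ x, 0 < ρ x) →
      ∀ (D : Type) (e : D → ℕ) (j : D → ℤ) (m : D → Fin d → ℤ),
        (∀ ν, 1 ≤ e ν ∧ e ν ≤ 2 ^ d - 1) →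
        Function.Injective (fun ν => (e ν, j ν, m ν)) →
      ∀ c : D → EuclideanSpace ℝ (Fin d),
        (∀ ν, c ν = (EuclideanSpace.equiv (Fin d) ℝ).symm
            (fun i => (2 : ℝ) ^ (j ν) * (m ν i : ℝ))) →
      ∀ ψ : D → EuclideanSpace ℝ (Fin d) → ℝ,
        (∀ ν, ContDiff ℝ (2 * k) (ψ ν)) →
        (∀ ν, Function.support (ψ ν) ⊆ Metric.closedBall (c ν) (Γ * (2 : ℝ) ^ (j ν))) →
        (∀ ν x, |(Lap d)^[k] (ψ ν) x| ≤ C₁ * ((2 : ℝ) ^ (j ν)) ^ (-(2 * (k : ℝ)))) →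
      ∀ f : D → ℝ, (∀ ν, |f ν| ≤ M * ((2 : ℝ) ^ (j ν)) ^ σ) →
      ∀ x, ∑' ν : {ν : D // ∀ y ∈ Metric.closedBall (c ν) (Γ * (2 : ℝ) ^ (j ν)),
              ρ y ≤ (2 : ℝ) ^ (j ν)},
            ENNReal.ofReal (|f ν| * |(Lap d)^[k] (ψ ν) x|) ≤
          ENNReal.ofReal (C * M * ρ x ^ (σ - 2 * (k : ℝ))) := by
  set t : ℝ := σ - 2 * (k : ℝ) with htdef
  have ht : t < 0 := by simp only [htdef]; linarith
  set r : ℝ := (2 : ℝ) ^ t with hrdef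
  have hr0 : 0 < r := Real.rpow_pos_of_pos two_pos t
  have hr1 : r < 1 := Real.rpow_lt_one_of_one_lt_of_neg one_lt_two ht
  set N : ℕ := ⌈2 * Γ⌉₊ + 1 with hNdef
  refine ⟨(2 : ℝ) ^ d * (N : ℝ) ^ d * C₁ * (1 - r)⁻¹, ?_, ?_⟩
  · have h1r : (0:ℝ) < 1 - r := by linarith
    positivity
  intro M hM ρ hρ D e j m he hinj c hc ψ hψ hsupp hlap f hf x
  set u : ℝ := ρ x with hudef
  have hu : 0 < u := hρ x
  set j₀ : ℤ := ⌈Real.logb 2 u⌉ with hj₀def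
  have key : ∀ J : ℤ, u ≤ (2 : ℝ) ^ J ↔ j₀ ≤ J := by
    intro J
    rw [hj₀def, Int.ceil_le, Real.logb_le_iff_le_rpow one_lt_two hu,
      Real.rpow_intCast]
  -- the indicator dominating function
  set V : ℤ → ENNReal := fun J => ENNReal.ofReal (C₁ * M * ((2 : ℝ) ^ J) ^ t) with hVdef
  set g : ℕ × ℤ × (Fin d → ℤ) → ENNReal := fun p =>
    if p.1 < 2 ^ d ∧ j₀ ≤ p.2.1 ∧ ∀ i, p.2.2 i ∈
        Finset.Icc ⌈x i / (2 : ℝ) ^ p.2.1 - Γ⌉ ⌊x i / (2 : ℝ) ^ p.2.1 + Γ⌋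
      then V p.2.1 else 0 with hgdef
  -- Step 1: each term is dominated
  have step1 : ∀ ν : {ν : D // ∀ y ∈ Metric.closedBall (c ν) (Γ * (2 : ℝ) ^ (j ν)),
      ρ y ≤ (2 : ℝ) ^ (j ν)},
      ENNReal.ofReal (|f ν| * |(Lap d)^[k] (ψ ν) x|) ≤ g (e ν, j ν, m ν) := by
    intro ⟨ν, hν⟩
    simp only
    by_cases hx : x ∈ Metric.closedBall (c ν) (Γ * (2 : ℝ) ^ (j ν))
    · have hℓ : (0 : ℝ) < (2 : ℝ) ^ (j ν) := zpow_pos two_pos _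
      have hcond : (e ν < 2 ^ d ∧ j₀ ≤ j ν ∧ ∀ i, m ν i ∈
          Finset.Icc ⌈x i / (2 : ℝ) ^ (j ν) - Γ⌉ ⌊x i / (2 : ℝ) ^ (j ν) + Γ⌋) := by
        refine ⟨?_, ?_, ?_⟩
        · have := (he ν).2
          have h2d : 0 < 2 ^ d := Nat.pow_pos (by norm_num : 0 < 2)
          omega
        · exact (key (j ν)).mp (hν x hx)
        · intro i
          have hci : c ν i = (2 : ℝ) ^ (j ν) * (m ν i : ℝ) := by rw [hc ν]; rfl
          have h1 : |x i - c ν i| ≤ Γ * (2 : ℝ) ^ (j ν) :=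
            (coord_le_dist x (c ν) i).trans (Metric.mem_closedBall.mp hx)
          rw [hci] at h1
          have h2 : |x i / (2 : ℝ) ^ (j ν) - (m ν i : ℝ)| ≤ Γ := by
            rw [abs_le] at h1 ⊢
            constructor
            · rw [div_sub' hℓ.ne', le_div_iff₀ hℓ]
              nlinarith [h1.1]
            · rw [div_sub' hℓ.ne', div_le_iff₀ hℓ]
              nlinarith [h1.2]
          rw [abs_le] at h2
          rw [Finset.mem_Icc]
          constructor
          · rw [Int.ceil_le]; push_cast; linarith [h2.2]
          · rw [Int.le_floor]; push_cast; linarith [h2.1]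
      rw [hgdef]
      simp only [if_pos hcond]
      rw [hVdef]
      apply ENNReal.ofReal_le_ofReal
      calc |f ν| * |(Lap d)^[k] (ψ ν) x|
          ≤ (M * ((2 : ℝ) ^ (j ν)) ^ σ) * (C₁ * ((2 : ℝ) ^ (j ν)) ^ (-(2 * (k : ℝ)))) :=
            mul_le_mul (hf ν) (hlap ν x) (abs_nonneg _)
              (by positivity)
        _ = C₁ * M * ((2 : ℝ) ^ (j ν)) ^ t := by
            rw [htdef, sub_eq_add_neg, Real.rpow_add hℓ]
            ring
    · have hz : (Lap d)^[k] (ψ ν) x = 0 := by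
        by_contra hz
        exact hx (closure_minimal (hsupp ν) Metric.isClosed_closedBall
          (iter_lap_support d k (ψ ν) hz))
      rw [hz]
      simp
  -- Step 2: compare with sum over the product index
  have hinj' : Function.Injective
      (fun ν : {ν : D // ∀ y ∈ Metric.closedBall (c ν) (Γ * (2 : ℝ) ^ (j ν)),
        ρ y ≤ (2 : ℝ) ^ (j ν)} => (e ν.1, j ν.1, m ν.1)) := by
    intro a b hab
    exact Subtype.ext (hinj hab)
  have step2 : ∑' ν : {ν : D // ∀ y ∈ Metric.closedBall (c ν) (Γ * (2 : ℝ) ^ (j ν)),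
      ρ y ≤ (2 : ℝ) ^ (j ν)}, ENNReal.ofReal (|f ν| * |(Lap d)^[k] (ψ ν) x|) ≤
      ∑' p : ℕ × ℤ × (Fin d → ℤ), g p :=
    le_trans (ENNReal.tsum_le_tsum step1)
      (ENNReal.tsum_comp_le_tsum_of_injective hinj' g)
  refine step2.trans ?_
  -- Step 3: compute the dominating sum
  -- inner sum over m
  have hmsum : ∀ J : ℤ, (∑' mm : Fin d → ℤ,
      (if j₀ ≤ J ∧ ∀ i, mm i ∈
          Finset.Icc ⌈x i / (2 : ℝ) ^ J - Γ⌉ ⌊x i / (2 : ℝ) ^ J + Γ⌋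
        then V J else 0)) ≤
      (N : ENNReal) ^ d * (if j₀ ≤ J then V J else 0) := by
    intro J
    by_cases hJ : j₀ ≤ J
    · simp only [hJ, true_and, if_true]
      set s : Finset (Fin d → ℤ) := Fintype.piFinset fun i =>
        Finset.Icc ⌈x i / (2 : ℝ) ^ J - Γ⌉ ⌊x i / (2 : ℝ) ^ J + Γ⌋ with hsdef
      have hvanish : ∀ mm ∉ s, (if ∀ i, mm i ∈
          Finset.Icc ⌈x i / (2 : ℝ) ^ J - Γ⌉ ⌊x i / (2 : ℝ) ^ J + Γ⌋
          then V J else 0) = 0 := by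
        intro mm hmm
        rw [if_neg]
        intro hall
        exact hmm (Fintype.mem_piFinset.mpr hall)
      rw [tsum_eq_sum hvanish]
      calc ∑ mm ∈ s, (if ∀ i, mm i ∈
            Finset.Icc ⌈x i / (2 : ℝ) ^ J - Γ⌉ ⌊x i / (2 : ℝ) ^ J + Γ⌋
            then V J else 0) ≤ s.card • V J :=
            Finset.sum_le_card_nsmul s _ (V J) (fun y _ => by split <;> simp)
        _ = (s.card : ENNReal) * V J := by rw [nsmul_eq_mul]
        _ ≤ (N : ENNReal) ^ d * V J := by
            apply mul_le_mul_left
            rw [hsdef, Fintype.card_piFinset]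
            rw [← Nat.cast_pow]
            apply Nat.cast_le.mpr
            calc ∏ i : Fin d, (Finset.Icc ⌈x i / (2 : ℝ) ^ J - Γ⌉
                  ⌊x i / (2 : ℝ) ^ J + Γ⌋).card
                ≤ ∏ _i : Fin d, N := by
                  apply Finset.prod_le_prod (fun _ _ => Nat.zero_le _)
                  intro i _
                  rw [Int.card_Icc]
                  apply Int.toNat_le.mpr
                  have hfc : (⌊x i / (2 : ℝ) ^ J + Γ⌋ : ℝ) + 1 -
                      ⌈x i / (2 : ℝ) ^ J - Γ⌉ ≤ 2 * Γ + 1 := by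
                    have h1 := Int.floor_le (x i / (2 : ℝ) ^ J + Γ)
                    have h2 := Int.le_ceil (x i / (2 : ℝ) ^ J - Γ)
                    linarith
                  have hN2 : (2 : ℝ) * Γ + 1 ≤ (N : ℝ) := by
                    rw [hNdef]
                    push_cast
                    have := Nat.le_ceil (2 * Γ)
                    linarith
                  exact_mod_cast hfc.trans hN2
              _ = N ^ d := by simp
    · simp only [hJ, false_and, if_false, tsum_zero, mul_zero, le_refl]
  -- the geometric sum over j
  have hgeom : (∑' J : ℤ, (if j₀ ≤ J then V J else 0)) ≤
      ENNReal.ofReal (C₁ * M * u ^ t) * ENNReal.ofReal ((1 - r)⁻¹) := by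
    have hinjN : Function.Injective (fun n : ℕ => j₀ + (n : ℤ)) := by
      intro a b hab
      simpa using hab
    have hsupp2 : Function.support (fun J : ℤ => if j₀ ≤ J then V J else 0) ⊆
        Set.range (fun n : ℕ => j₀ + (n : ℤ)) := by
      intro J hJ
      simp only [Function.mem_support, ne_eq, ite_eq_right_iff, not_forall] at hJ
      obtain ⟨hle, -⟩ := hJ
      exact ⟨(J - j₀).toNat, by show j₀ + ((J - j₀).toNat : ℤ) = J; omega⟩
    rw [← hinjN.tsum_eq hsupp2]
    have hterm : ∀ n : ℕ, (if j₀ ≤ j₀ + (n : ℤ) then V (j₀ + n) else 0) =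
        ENNReal.ofReal (C₁ * M * ((2 : ℝ) ^ j₀) ^ t) * (ENNReal.ofReal r) ^ n := by
      intro n
      rw [if_pos (by omega)]
      simp only [hVdef]
      have h2 : ((2 : ℝ) ^ (j₀ + (n : ℤ))) ^ t = ((2 : ℝ) ^ j₀) ^ t * r ^ n := by
        rw [zpow_add₀ (two_ne_zero), Real.mul_rpow (by positivity) (by positivity)]
        congr 1
        rw [zpow_natCast, ← Real.rpow_natCast (2 : ℝ) n, ← Real.rpow_mul (by norm_num),
          mul_comm, Real.rpow_mul (by norm_num), Real.rpow_natCast]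
      rw [h2, ← mul_assoc, ENNReal.ofReal_mul (by positivity),
        ENNReal.ofReal_pow hr0.le]
    calc ∑' n : ℕ, (if j₀ ≤ j₀ + (n : ℤ) then V (j₀ + n) else 0)
        = ∑' n : ℕ, ENNReal.ofReal (C₁ * M * ((2 : ℝ) ^ j₀) ^ t) *
            (ENNReal.ofReal r) ^ n := by exact tsum_congr hterm
      _ = ENNReal.ofReal (C₁ * M * ((2 : ℝ) ^ j₀) ^ t) *
            (1 - ENNReal.ofReal r)⁻¹ := by
          rw [ENNReal.tsum_mul_left, ENNReal.tsum_geometric]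
      _ ≤ ENNReal.ofReal (C₁ * M * u ^ t) * ENNReal.ofReal ((1 - r)⁻¹) := by
          apply mul_le_mul'
          · apply ENNReal.ofReal_le_ofReal
            have hub : u ≤ (2 : ℝ) ^ j₀ := (key j₀).mpr le_rfl
            have h3 := Real.rpow_le_rpow_of_nonpos hu hub ht.le
            exact mul_le_mul_of_nonneg_left h3 (by positivity)
          · rw [ENNReal.ofReal_inv_of_pos (by linarith),
              ENNReal.ofReal_sub 1 hr0.le, ENNReal.ofReal_one]
  -- assemble
  calc ∑' p : ℕ × ℤ × (Fin d → ℤ), g p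
      = ∑' (a : ℕ) (q : ℤ × (Fin d → ℤ)), g (a, q) := by
        exact ENNReal.tsum_prod (f := fun a q => g (a, q))
    _ = ∑' a : ℕ, (if a < 2 ^ d then
          ∑' (J : ℤ) (mm : Fin d → ℤ), (if j₀ ≤ J ∧ ∀ i, mm i ∈
            Finset.Icc ⌈x i / (2 : ℝ) ^ J - Γ⌉ ⌊x i / (2 : ℝ) ^ J + Γ⌋
            then V J else 0) else 0) := by
        apply tsum_congr
        intro a
        by_cases ha : a < 2 ^ d
        · rw [if_pos ha]
          rw [show (∑' q : ℤ × (Fin d → ℤ), g (a, q)) =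
              ∑' (J : ℤ) (mm : Fin d → ℤ), g (a, (J, mm)) from
            ENNReal.tsum_prod (f := fun J mm => g (a, (J, mm)))]
          apply tsum_congr; intro J; apply tsum_congr; intro mm
          rw [hgdef]
          simp only [ha, true_and]
        · rw [if_neg ha]
          rw [hgdef]
          simp only [ha, false_and, if_false]
          exact tsum_zero
    _ ≤ ∑' a : ℕ, (if a < 2 ^ d then
          (N : ENNReal) ^ d * ∑' J : ℤ, (if j₀ ≤ J then V J else 0) else 0) := by
        apply ENNReal.tsum_le_tsum
        intro a
        split
        · rw [← ENNReal.tsum_mul_left]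
          exact ENNReal.tsum_le_tsum hmsum
        · exact le_rfl
    _ = (2 ^ d : ℕ) * ((N : ENNReal) ^ d * ∑' J : ℤ, (if j₀ ≤ J then V J else 0)) := by
        rw [tsum_eq_sum (s := Finset.range (2 ^ d))
          (fun b hb => by rw [if_neg (by simpa using hb)])]
        rw [Finset.sum_ite_of_true (fun b hb => Finset.mem_range.mp hb),
          Finset.sum_const, Finset.card_range, nsmul_eq_mul]
    _ ≤ (2 ^ d : ℕ) * ((N : ENNReal) ^ d *
          (ENNReal.ofReal (C₁ * M * u ^ t) * ENNReal.ofReal ((1 - r)⁻¹))) := by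
        apply mul_le_mul'
        · exact le_rfl
        · exact mul_le_mul' le_rfl hgeom
    _ = ENNReal.ofReal ((2 : ℝ) ^ d * (N : ℝ) ^ d * C₁ * (1 - r)⁻¹ * M * u ^ t) := by
        rw [← ENNReal.ofReal_natCast (2 ^ d), ← ENNReal.ofReal_natCast N,
          ← ENNReal.ofReal_pow (Nat.cast_nonneg N),
          ← ENNReal.ofReal_mul (by positivity),
          ← ENNReal.ofReal_mul (by positivity),
          ← ENNReal.ofReal_mul (by positivity)]
        congr 1
        push_cast
        ring
    _ = ENNReal.ofReal ((2 : ℝ) ^ d * (N : ℝ) ^ d * C₁ * (1 - r)⁻¹ * M * u ^ (σ - 2 * (k:ℝ))) := by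
        rw [htdef]
    _ ≤ _ := by
        apply ENNReal.ofReal_le_ofReal
        apply le_of_eq
        ring
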